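/- Let X, Y be compact Hausdorff spaces, Π : Y → X a continuous surjection, and T : C(Y) → C(X) a unital bounded linear map with ‖T‖ = 1 and T ∘ Π* = id on C(X). For x ∈ X let μ_x be the unique regular Borel measure on Y with T(f)(x) = ∫_Y f dμ_x for all f ∈ C(Y). Then for each x ∈ X, T(f)(x) lies in the closed convex hull of f(Π⁻¹({x})) for every f ∈ C(Y). -/

import Mathlib

open Complex ContinuousMap Set

noncomputable section CCH

variable {Y : Type*} [TopologicalSpace Y]

/-- coerce a real-valued continuous map to a complex-valued one -/
def ucMap (u : C(Y, ℝ)) : C(Y, ℂ) :=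
  ⟨fun y => (u y : ℂ), Complex.continuous_ofReal.comp u.continuous⟩

@[simp] lemma ucMap_apply (u : C(Y, ℝ)) (y : Y) : ucMap u y = (u y : ℂ) := rfl

/-- real part as a continuous map -/
def reMap (h : C(Y, ℂ)) : C(Y, ℝ) :=
  ⟨fun y => (h y).re, Complex.continuous_re.comp h.continuous⟩

def imMap (h : C(Y, ℂ)) : C(Y, ℝ) :=
  ⟨fun y => (h y).im, Complex.continuous_im.comp h.continuous⟩

@[simp] lemma reMap_apply (h : C(Y, ℂ)) (y : Y) : reMap h y = (h y).re := rfl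
@[simp] lemma imMap_apply (h : C(Y, ℂ)) (y : Y) : imMap h y = (h y).im := rfl

lemma ucMap_sub (u v : C(Y, ℝ)) : ucMap (u - v) = ucMap u - ucMap v := by
  ext y; simp

lemma ucMap_smul (r : ℝ) (u : C(Y, ℝ)) : ucMap (r • u) = (r : ℂ) • ucMap u := by
  ext y; simp

lemma decompMap (h : C(Y, ℂ)) :
    h = ucMap (reMap h) + Complex.I • ucMap (imMap h) := by
  ext y
  simp [Complex.ext_iff]

variable [CompactSpace Y] (φ : C(Y, ℂ) →L[ℂ] ℂ)

lemma phi_im_eq_zero (h1 : φ 1 = 1) (hn : ∀ h, ‖φ h‖ ≤ ‖h‖) (u : C(Y, ℝ)) :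
    (φ (ucMap u)).im = 0 := by
  set a := (φ (ucMap u)).re with ha
  set b := (φ (ucMap u)).im with hb
  have key : ∀ t : ℝ, a ^ 2 + (b + t) ^ 2 ≤ ‖u‖ ^ 2 + t ^ 2 := by
    intro t
    set v : C(Y, ℂ) := ucMap u + ((t : ℂ) * Complex.I) • 1 with hv
    have hval : φ v = φ (ucMap u) + (t : ℂ) * Complex.I := by
      simp [hv, map_add, map_smul, h1, smul_eq_mul]
    have hvn : ‖v‖ ≤ Real.sqrt (‖u‖ ^ 2 + t ^ 2) := by
      rw [ContinuousMap.norm_le _ (Real.sqrt_nonneg _)]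
      intro y
      have : v y = ⟨u y, t⟩ := by
        simp [hv, Complex.ext_iff]
      rw [this]
      rw [Complex.norm_def, Complex.normSq_mk]
      apply Real.sqrt_le_sqrt
      have hy : |u y| ≤ ‖u‖ := by
        have := u.norm_coe_le_norm y
        simpa using this
      have h6 : u y * u y ≤ ‖u‖ ^ 2 := by
        have h7 := mul_self_le_mul_self (abs_nonneg (u y)) hy
        rw [abs_mul_abs_self] at h7
        nlinarith
      nlinarith [h6]
    have h2 : ‖φ v‖ ^ 2 ≤ ‖u‖ ^ 2 + t ^ 2 := by
      have := hn v
      have h3 : ‖φ v‖ ≤ Real.sqrt (‖u‖ ^ 2 + t ^ 2) := this.trans hvn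
      have h4 := Real.sq_sqrt (by positivity : (0:ℝ) ≤ ‖u‖ ^ 2 + t ^ 2)
      nlinarith [norm_nonneg (φ v)]
    have h5 : ‖φ v‖ ^ 2 = a ^ 2 + (b + t) ^ 2 := by
      rw [hval, Complex.sq_norm, Complex.normSq_apply]
      simp [← ha, ← hb]
      ring
    linarith [h5 ▸ h2]
  by_contra hb0
  have hb2 : 0 < b ^ 2 := by positivity
  have := key (b * ((‖u‖ ^ 2 + 1) / (2 * b ^ 2)))
  have hexp : 2 * b * (b * ((‖u‖ ^ 2 + 1) / (2 * b ^ 2))) = ‖u‖ ^ 2 + 1 := by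
    field_simp
  nlinarith [sq_nonneg a, sq_nonneg b]


lemma phi_re_nonneg (h1 : φ 1 = 1) (hn : ∀ h, ‖φ h‖ ≤ ‖h‖) (u : C(Y, ℝ))
    (hu : ∀ y, 0 ≤ u y) : 0 ≤ (φ (ucMap u)).re := by
  set M := ‖u‖ with hM
  have hM0 : 0 ≤ M := norm_nonneg u
  set v : C(Y, ℂ) := ucMap u - ((M / 2 : ℝ) : ℂ) • 1 with hv
  have hval : φ v = φ (ucMap u) - ((M / 2 : ℝ) : ℂ) := by
    simp [hv, map_sub, map_smul, h1, smul_eq_mul]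
  have hvn : ‖v‖ ≤ M / 2 := by
    rw [ContinuousMap.norm_le _ (by linarith)]
    intro y
    have hvy : v y = ((u y - M / 2 : ℝ) : ℂ) := by
      simp [hv, Complex.ext_iff]
    rw [hvy, Complex.norm_real, Real.norm_eq_abs]
    have hy : |u y| ≤ M := by simpa using u.norm_coe_le_norm y
    have := hu y
    rw [abs_le]
    constructor <;> [linarith; (rw [abs_le] at hy; linarith [hy.2])]
  have h2 : |(φ v).re| ≤ M / 2 := by
    calc |(φ v).re| ≤ ‖φ v‖ := Complex.abs_re_le_norm (φ v)
    _ ≤ ‖v‖ := hn v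
    _ ≤ M / 2 := hvn
  have h3 : (φ v).re = (φ (ucMap u)).re - M / 2 := by
    rw [hval]; simp
  rw [h3, abs_le] at h2
  linarith [h2.1]

lemma phi_re_mono (h1 : φ 1 = 1) (hn : ∀ h, ‖φ h‖ ≤ ‖h‖) (u v : C(Y, ℝ))
    (huv : ∀ y, u y ≤ v y) : (φ (ucMap u)).re ≤ (φ (ucMap v)).re := by
  have := phi_re_nonneg φ h1 hn (v - u) (fun y => by simpa using sub_nonneg.mpr (huv y))
  rw [ucMap_sub, map_sub, Complex.sub_re] at this
  linarith

lemma phi_re_eq (h1 : φ 1 = 1) (hn : ∀ h, ‖φ h‖ ≤ ‖h‖) (h : C(Y, ℂ)) :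
    (φ h).re = (φ (ucMap (reMap h))).re := by
  conv_lhs => rw [decompMap h]
  rw [map_add, map_smul, Complex.add_re, smul_eq_mul, Complex.mul_re]
  simp [phi_im_eq_zero φ h1 hn]

/-- The main half-plane estimate: if pointwise `(c * h y).re ≤ v y`, then
`(c * φ h).re ≤ (φ (ucMap v)).re`. -/
lemma phi_halfplane (h1 : φ 1 = 1) (hn : ∀ h, ‖φ h‖ ≤ ‖h‖) (h : C(Y, ℂ)) (c : ℂ)
    (v : C(Y, ℝ)) (hpt : ∀ y, (c * h y).re ≤ v y) :
    (c * φ h).re ≤ (φ (ucMap v)).re := by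
  have e1 : c * φ h = φ (c • h) := by rw [map_smul, smul_eq_mul]
  rw [e1, phi_re_eq φ h1 hn (c • h)]
  apply phi_re_mono φ h1 hn
  intro y
  simpa using hpt y

lemma phi_const_re (h1 : φ 1 = 1) (α : ℝ) :
    (φ (ucMap (ContinuousMap.const Y α))).re = α := by
  have : ucMap (ContinuousMap.const Y α) = (α : ℂ) • (1 : C(Y, ℂ)) := by
    ext y; simp
  rw [this, map_smul, h1, smul_eq_mul, mul_one, Complex.ofReal_re]

end CCH

theorem value_in_closed_convex_hull_of_fibre_image {X Y : Type*}
    [TopologicalSpace X] [CompactSpace X] [T2Space X]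
    [TopologicalSpace Y] [CompactSpace Y] [T2Space Y]
    (proj : C(Y, X)) (hsurj : Function.Surjective proj)
    (T : C(Y, ℂ) →L[ℂ] C(X, ℂ)) (hunital : T 1 = 1) (hnorm : ‖T‖ = 1)
    (hTid : ∀ g : C(X, ℂ), T (g.comp proj) = g) :
    ∀ (f : C(Y, ℂ)) (x : X),
      T f x ∈ closure (convexHull ℝ (f '' (proj ⁻¹' {x}))) := by
  intro f x
  by_contra hz
  set F : Set Y := proj ⁻¹' {x} with hF
  -- the evaluation functional
  set φ : C(Y, ℂ) →L[ℂ] ℂ := (ContinuousMap.evalCLM ℂ x).comp T with hφ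
  have hφ_apply : ∀ h : C(Y, ℂ), φ h = T h x := fun h => rfl
  have h1 : φ 1 = 1 := by rw [hφ_apply, hunital]; rfl
  have hn : ∀ h : C(Y, ℂ), ‖φ h‖ ≤ ‖h‖ := by
    intro h
    calc ‖φ h‖ = ‖T h x‖ := rfl
    _ ≤ ‖T h‖ := (T h).norm_coe_le_norm x
    _ ≤ ‖T‖ * ‖h‖ := T.le_opNorm h
    _ = ‖h‖ := by rw [hnorm, one_mul]
  -- separation
  obtain ⟨ℓ, α, hsep, hsep2⟩ := geometric_hahn_banach_closed_point
    ((convex_convexHull ℝ (f '' F)).closure) isClosed_closure hz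
  set cc : ℂ := (ℓ 1 : ℂ) - Complex.I * (ℓ Complex.I : ℂ) with hcc
  have hccl : ∀ w : ℂ, (cc * w).re = ℓ w := by
    intro w
    have hw : w = w.re • (1 : ℂ) + w.im • Complex.I := by
      simp [Complex.real_smul, Complex.re_add_im]
    conv_rhs => rw [hw]
    rw [map_add, map_smul, map_smul]
    simp [hcc, Complex.mul_re, Complex.sub_re, Complex.sub_im, Complex.mul_im]
    ring
  have hsub : ∀ w ∈ f '' F, w ∈ closure (convexHull ℝ (f '' F)) :=
    fun w hw => subset_closure (subset_convexHull ℝ _ hw)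
  have himg : ∀ w ∈ f '' F, (cc * w).re < α := by
    intro w hw; rw [hccl]; exact hsep w (hsub w hw)
  have hzα : α < (cc * (T f x)).re := by rw [hccl]; exact hsep2
  -- open set V around the fibre
  set V : Set Y := {y | (cc * f y).re < α} with hV
  have hVopen : IsOpen V := by
    have : Continuous fun y => (cc * f y).re :=
      Complex.continuous_re.comp (continuous_const.mul f.continuous)
    exact isOpen_lt this continuous_const
  have hFV : F ⊆ V := by
    intro y hy
    exact himg (f y) ⟨y, hy, rfl⟩
  -- closed map and the neighbourhood U of x
  have hcm : IsClosedMap proj := proj.continuous.isClosedMap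
  set Cset : Set X := proj '' Vᶜ with hCset
  have hCclosed : IsClosed Cset := hcm _ (hVopen.isClosed_compl)
  have hxC : x ∉ Cset := by
    rintro ⟨y, hyV, hyx⟩
    exact hyV (hFV (by simp [hF, hyx]))
  -- Urysohn
  obtain ⟨g, hg0, hg1, hg01⟩ := exists_continuous_zero_one_of_isClosed
    hCclosed (isClosed_singleton (x := x)) (by simp [Set.disjoint_singleton_right, hxC])
  have hgx : g x = 1 := hg1 rfl
  -- witness on the fibre
  obtain ⟨y₀, hy₀⟩ := hsurj x
  set w : ℂ := f y₀ with hw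
  have hwα : (cc * w).re < α := himg w ⟨y₀, by simp [hF, hy₀], rfl⟩
  -- the modified function
  set P : C(Y, ℝ) := g.comp proj with hP
  have hP01 : ∀ y, P y ∈ Set.Icc (0:ℝ) 1 := fun y => hg01 (proj y)
  set f' : C(Y, ℂ) := ucMap P * f + w • ucMap (1 - P) with hf'
  -- pointwise bound for f'
  have hpt : ∀ y, (cc * f' y).re ≤ α := by
    intro y
    have hval : f' y = (P y : ℂ) * f y + w * ((1 : ℝ) - P y : ℝ) := by
      simp [hf', smul_eq_mul]
    have h01 := hP01 y
    have hre : (cc * f' y).re = P y * (cc * f y).re + (1 - P y) * (cc * w).re := by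
      rw [hval]
      have : cc * ((P y : ℂ) * f y + w * ((1 : ℝ) - P y : ℝ)) =
          ((P y : ℝ) : ℂ) * (cc * f y) + (((1 : ℝ) - P y : ℝ) : ℂ) * (cc * w) := by
        push_cast
        ring
      rw [this, Complex.add_re, Complex.re_ofReal_mul, Complex.re_ofReal_mul]
    rw [hre]
    have hterm1 : P y * (cc * f y).re ≤ P y * α := by
      rcases eq_or_lt_of_le h01.1 with he | hlt
      · rw [← he]; simp
      · have hyU : proj y ∉ Cset := by
          intro hyC
          have h0 : g (proj y) = 0 := by simpa using hg0 hyC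
          have hPy : P y = 0 := by simpa [hP] using h0
          linarith
        have hyV : y ∈ V := by
          by_contra hyV
          exact hyU ⟨y, hyV, rfl⟩
        exact mul_le_mul_of_nonneg_left (le_of_lt hyV) h01.1
    have hterm2 : (1 - P y) * (cc * w).re ≤ (1 - P y) * α :=
      mul_le_mul_of_nonneg_left (le_of_lt hwα) (by linarith [h01.2])
    have := hterm1; have := hterm2; linarith
  -- value of φ on the projection parts
  set gC : C(X, ℂ) := ⟨fun t => (g t : ℂ), Complex.continuous_ofReal.comp g.continuous⟩ with hgC
  have hucP : ucMap P = gC.comp proj := by ext y; rfl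
  have hφP : φ (ucMap P) = 1 := by
    rw [hucP, hφ_apply, hTid gC]
    simp [hgC, hgx]
  have hone : ucMap (1 - P) = 1 - ucMap P := by ext y; push_cast; simp
  have hφ1P : φ (ucMap (1 - P)) = 0 := by
    rw [hone, map_sub, h1, hφP, sub_self]
  -- φ ((1-P) f) = 0
  set k : C(Y, ℂ) := ucMap (1 - P) * f with hk
  have hφk : φ k = 0 := by
    by_contra hd
    set d : ℂ := φ k with hd'
    have hdn : 0 < ‖d‖ := norm_pos_iff.mpr hd
    set c' : ℂ := (starRingEnd ℂ) d / (‖d‖ : ℂ) with hc'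
    have hkey : (c' * φ k).re ≤ (φ (ucMap ((‖f‖ : ℝ) • (1 - P)))).re := by
      apply phi_halfplane φ h1 hn
      intro y
      have hky : k y = (((1 : ℝ) - P y : ℝ) : ℂ) * f y := by
        simp [hk]
      rw [hky]
      have h01 := hP01 y
      have : c' * ((((1 : ℝ) - P y : ℝ) : ℂ) * f y) =
          (((1 : ℝ) - P y : ℝ) : ℂ) * (c' * f y) := by ring
      rw [this, Complex.re_ofReal_mul]
      have hc'n : ‖c'‖ ≤ 1 := by
        rw [hc']
        rw [norm_div]
        simp only [RCLike.norm_conj]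
        rw [Complex.norm_real, Real.norm_eq_abs, abs_of_pos hdn]
        rw [div_self (ne_of_gt hdn)]
      have hrey : (c' * f y).re ≤ ‖f‖ := by
        calc (c' * f y).re ≤ ‖c' * f y‖ := Complex.re_le_norm _
        _ = ‖c'‖ * ‖f y‖ := by rw [norm_mul]
        _ ≤ 1 * ‖f‖ := by
            apply mul_le_mul hc'n (f.norm_coe_le_norm y) (norm_nonneg _) zero_le_one
        _ = ‖f‖ := one_mul _
      have hval : ((‖f‖ : ℝ) • (1 - P)) y = ‖f‖ * (1 - P y) := by simp
      rw [hval]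
      have : (1 : ℝ) - P y ≥ 0 := by linarith [h01.2]
      linarith [mul_le_mul_of_nonneg_left hrey this]
    have hrhs : (φ (ucMap ((‖f‖ : ℝ) • (1 - P)))).re = 0 := by
      rw [ucMap_smul, map_smul, smul_eq_mul, hφ1P, mul_zero, Complex.zero_re]
    have hlhs : (c' * φ k).re = ‖d‖ := by
      have hne : (‖d‖ : ℂ) ≠ 0 := by exact_mod_cast ne_of_gt hdn
      have h9 : c' * φ k = ((‖d‖ : ℝ) : ℂ) := by
        rw [← hd', hc']
        rw [div_mul_eq_mul_div, mul_comm ((starRingEnd ℂ) d) d, Complex.mul_conj]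
        rw [Complex.normSq_eq_norm_sq, ← Complex.ofReal_div]
        norm_cast
        have habs : ‖d‖ ≠ 0 := by
          exact ne_of_gt hdn
        field_simp [habs]
        try ring
      rw [h9, Complex.ofReal_re]
    rw [hlhs, hrhs] at hkey
    linarith
  -- φ f' = φ f
  have hsplit : ucMap P * f = f - k := by
    rw [hk, hone]
    ring
  have hφf' : φ f' = φ f := by
    rw [hf', map_add, map_smul, hφ1P, smul_zero, add_zero, hsplit, map_sub, hφk, sub_zero]
  -- contradiction
  have hfinal : (cc * φ f').re ≤ α := by
    have := phi_halfplane φ h1 hn f' cc (ContinuousMap.const Y α)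
      (fun y => by simpa using hpt y)
    rwa [phi_const_re φ h1 α] at this
  rw [hφf', hφ_apply] at hfinal
  linarith
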